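/- Assume α_0 > 0 and α_1 > 0. Then Z := ∫_H ‖u‖^{−1} γ(du) is finite and strictly positive. Consequently Z^{−1}‖u‖^{−1}γ(du) is a Borel probability measure on H, and its image under the radial projection u ↦ u/‖u‖ is a Borel probability measure μ on the unit sphere S of H. -/

import Mathlib

open MeasureTheory
open scoped RealInnerProductSpace
open Real Complex
open scoped Real NNReal ENNReal

section Aux

lemma cos_gauss_integral {a : ℝ} (ha : 0 < a) (k : ℝ) :
    ∫ x : ℝ, Real.cos (k * x) * Real.exp (-(a * x ^ 2))
      = Real.sqrt (π / a) * Real.exp (-(k ^ 2 / (4 * a))) := by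
  have hb : (0:ℝ) < (↑a : ℂ).re := by simpa using ha
  have key := fourierIntegral_gaussian hb (k : ℂ)
  have hint : Integrable fun x : ℝ => Complex.exp (Complex.I * k * x) * Complex.exp (-(a:ℂ) * x ^ 2) := by
    have h2 : (fun x : ℝ => Complex.exp (Complex.I * k * x) * Complex.exp (-(a:ℂ) * x ^ 2))
        = fun x : ℝ => Complex.exp (-(a:ℂ) * x ^ 2 + Complex.I * k * x) := by
      funext x; rw [← Complex.exp_add]; ring_nf
    rw [h2]
    simpa using integrable_cexp_quadratic (by simpa using ha) (Complex.I * k) 0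
  have hre := congrArg Complex.re key
  rw [← RCLike.re_to_complex, ← integral_re hint] at hre
  have hL : (fun x : ℝ => RCLike.re (Complex.exp (Complex.I * k * x) * Complex.exp (-(a:ℂ) * x ^ 2)))
      = fun x : ℝ => Real.cos (k * x) * Real.exp (-(a * x ^ 2)) := by
    funext x
    rw [RCLike.re_to_complex, ← Complex.exp_add]
    have h3 : Complex.I * k * x + -(a:ℂ) * x ^ 2 = ⟨-(a * x^2), k * x⟩ := by
      push_cast [Complex.ext_iff]
      constructor <;> simp [← Complex.ofReal_pow] <;> ring
    rw [h3, Complex.exp_re]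
    simp [mul_comm]
  rw [hL] at hre
  rw [hre]
  have hR : ((↑π / ↑a : ℂ) ^ (1/2 : ℂ) * Complex.exp (-(k:ℂ) ^ 2 / (4 * ↑a))).re
      = Real.sqrt (π / a) * Real.exp (-(k ^ 2 / (4 * a))) := by
    have h4 : ((↑π / ↑a : ℂ)) = ((π / a : ℝ) : ℂ) := by push_cast; ring
    have h5 : (-(k:ℂ) ^ 2 / (4 * ↑a)) = ((-(k^2 / (4*a)) : ℝ) : ℂ) := by push_cast; ring
    rw [h4, h5, ← Complex.ofReal_exp,
      show ((1:ℂ)/2) = ((1/2 : ℝ) : ℂ) by norm_num,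
      ← Complex.ofReal_cpow (by positivity), ← Complex.ofReal_mul, Complex.ofReal_re]
    rw [Real.sqrt_eq_rpow]
  rw [hR]

lemma integral_cos_gaussianReal (v : ℝ≥0) :
    ∫ z, Real.cos z ∂(ProbabilityTheory.gaussianReal 0 v) = Real.exp (-(v : ℝ) / 2) := by
  rcases eq_or_ne v 0 with hv | hv
  · simp [hv]
  · rw [ProbabilityTheory.gaussianReal_of_var_ne_zero _ hv]
    have hpdf : ProbabilityTheory.gaussianPDF 0 v
        = fun x => ((Real.toNNReal (ProbabilityTheory.gaussianPDFReal 0 v x) : ℝ≥0) : ℝ≥0∞) := by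
      funext x; rfl
    rw [hpdf, integral_withDensity_eq_integral_smul]
    · have hvpos : (0:ℝ) < (v:ℝ) := by positivity
      have key := cos_gauss_integral (a := (2 * (v:ℝ))⁻¹) (by positivity) 1
      have : ∀ x : ℝ, (Real.toNNReal (ProbabilityTheory.gaussianPDFReal 0 v x)) • Real.cos x
          = (Real.sqrt (2 * π * v))⁻¹ * (Real.cos (1 * x) * Real.exp (-((2 * (v:ℝ))⁻¹ * x ^ 2))) := by
        intro x
        rw [NNReal.smul_def, Real.coe_toNNReal _ (ProbabilityTheory.gaussianPDFReal_nonneg 0 v x)]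
        rw [ProbabilityTheory.gaussianPDFReal]
        rw [smul_eq_mul, one_mul]
        rw [show -(x-0)^2/(2*(v:ℝ)) = -((2 * (v:ℝ))⁻¹ * x ^ 2) by field_simp; ring]
        ring
      rw [integral_congr_ae (Filter.Eventually.of_forall this)]
      rw [integral_const_mul, key]
      rw [show π / (2 * (v:ℝ))⁻¹ = 2 * π * v by field_simp]
      rw [show (1:ℝ)^2 / (4 * (2 * (v:ℝ))⁻¹) = (v:ℝ)/2 by field_simp; ring]
      rw [inv_mul_cancel_left₀ (by positivity)]
      ring_nf
    · exact measurable_real_toNNReal.comp (ProbabilityTheory.measurable_gaussianPDFReal 0 v)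

variable {H : Type*} [NormedAddCommGroup H] [InnerProductSpace ℝ H] [CompleteSpace H]
    [SecondCountableTopology H] [MeasurableSpace H] [BorelSpace H]

    [SecondCountableTopology H] [MeasurableSpace H] [BorelSpace H]

lemma char_two (b : HilbertBasis ℕ ℝ H) (α : ℕ → ℝ)
    (γ : Measure H) [IsProbabilityMeasure γ]
    (hγ : ∀ x : H, Measure.map (fun u => ⟪u, x⟫) γ
      = ProbabilityTheory.gaussianReal 0
          (Real.toNNReal (∑' n, (α n) ^ 2 * ⟪x, b n⟫ ^ 2)))
    (s t : ℝ) :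
    ∫ u, Real.cos (s * ⟪u, b 0⟫ + t * ⟪u, b 1⟫) ∂γ
      = Real.exp (-(α 0 ^ 2 * s ^ 2 + α 1 ^ 2 * t ^ 2) / 2) := by
  set x : H := s • b 0 + t • b 1 with hxdef
  have hip : ∀ n, ⟪b 0, b n⟫ = if (0:ℕ) = n then (1:ℝ) else 0 :=
    fun n => orthonormal_iff_ite.mp b.orthonormal 0 n
  have hip1 : ∀ n, ⟪b 1, b n⟫ = if (1:ℕ) = n then (1:ℝ) else 0 :=
    fun n => orthonormal_iff_ite.mp b.orthonormal 1 n
  have hxn : ∀ n, ⟪x, b n⟫ = s * (if (0:ℕ) = n then (1:ℝ) else 0)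
      + t * (if (1:ℕ) = n then (1:ℝ) else 0) := by
    intro n
    rw [hxdef, inner_add_left, real_inner_smul_left, real_inner_smul_left, hip n, hip1 n]
  have htsum : (∑' n, (α n) ^ 2 * ⟪x, b n⟫ ^ 2) = α 0 ^ 2 * s ^ 2 + α 1 ^ 2 * t ^ 2 := by
    have h0 : ∀ n ∉ ({0, 1} : Finset ℕ), (α n) ^ 2 * ⟪x, b n⟫ ^ 2 = 0 := by
      intro n hn
      simp only [Finset.mem_insert, Finset.mem_singleton, not_or] at hn
      rw [hxn n, if_neg (fun h => hn.1 h.symm), if_neg (fun h => hn.2 h.symm)]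
      ring
    rw [tsum_eq_sum h0, Finset.sum_pair (by norm_num : (0:ℕ) ≠ 1)]
    rw [hxn 0, hxn 1]
    norm_num
  have hx : ∀ u : H, s * ⟪u, b 0⟫ + t * ⟪u, b 1⟫ = ⟪u, x⟫ := by
    intro u
    rw [hxdef, inner_add_right, real_inner_smul_right, real_inner_smul_right]
  simp only [hx]
  have hmeas : Measurable fun u : H => ⟪u, x⟫ :=
    (continuous_id.inner continuous_const).measurable
  rw [← integral_map hmeas.aemeasurable Real.continuous_cos.aestronglyMeasurable,
    hγ x, integral_cos_gaussianReal, htsum,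
    Real.coe_toNNReal _ (by positivity), neg_div]


lemma laplace_two (b : HilbertBasis ℕ ℝ H) (α : ℕ → ℝ)
    (γ : Measure H) [IsProbabilityMeasure γ]
    (hγ : ∀ x : H, Measure.map (fun u => ⟪u, x⟫) γ
      = ProbabilityTheory.gaussianReal 0
          (Real.toNNReal (∑' n, (α n) ^ 2 * ⟪x, b n⟫ ^ 2)))
    {lam : ℝ} (hlam : 0 < lam) :
    ∫ u, Real.exp (-(lam * (⟪u, b 0⟫ ^ 2 + ⟪u, b 1⟫ ^ 2))) ∂γ
      = ((Real.sqrt (π / (4 * lam)⁻¹))⁻¹ * (Real.sqrt (π / (4 * lam)⁻¹))⁻¹)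
        * (Real.sqrt (π / ((4 * lam)⁻¹ + α 0 ^ 2 / 2))
          * Real.sqrt (π / ((4 * lam)⁻¹ + α 1 ^ 2 / 2))) := by
  set a : ℝ := (4 * lam)⁻¹ with hadef
  have ha : 0 < a := by positivity
  have hsqrt_pos : 0 < Real.sqrt (π / a) := Real.sqrt_pos.mpr (by positivity)
  set c : ℝ := (Real.sqrt (π / a))⁻¹ with hcdef
  -- pointwise expansion
  have hexpand : ∀ r : ℝ, Real.exp (-(lam * r ^ 2))
      = c * ∫ s : ℝ, Real.cos (r * s) * Real.exp (-(a * s ^ 2)) := by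
    intro r
    rw [cos_gauss_integral ha r]
    rw [show r ^ 2 / (4 * a) = lam * r ^ 2 by rw [hadef]; field_simp]
    rw [hcdef, ← mul_assoc, inv_mul_cancel₀ hsqrt_pos.ne', one_mul]
  -- the two-variable integrand
  set F : H → ℝ × ℝ → ℝ := fun u p =>
    (Real.cos (⟪u, b 0⟫ * p.1) * Real.exp (-(a * p.1 ^ 2)))
      * (Real.cos (⟪u, b 1⟫ * p.2) * Real.exp (-(a * p.2 ^ 2))) with hFdef
  have hX : Continuous fun u : H => ⟪u, b 0⟫ := continuous_id.inner continuous_const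
  have hY : Continuous fun u : H => ⟪u, b 1⟫ := continuous_id.inner continuous_const
  have hFcont : Continuous (Function.uncurry F) := by
    rw [hFdef]
    apply Continuous.mul
    · exact ((Real.continuous_cos.comp ((hX.comp continuous_fst).mul
        (continuous_fst.comp continuous_snd))).mul
        (Real.continuous_exp.comp ((continuous_const.mul
          ((continuous_fst.comp continuous_snd).pow 2)).neg)))
    · exact ((Real.continuous_cos.comp ((hY.comp continuous_fst).mul
        (continuous_snd.comp continuous_snd))).mul
        (Real.continuous_exp.comp ((continuous_const.mul
          ((continuous_snd.comp continuous_snd).pow 2)).neg)))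
  have hg2 : Integrable (fun p : ℝ × ℝ =>
      Real.exp (-(a * p.1 ^ 2)) * Real.exp (-(a * p.2 ^ 2))) ((volume : Measure ℝ).prod volume) := by
    have h1 : Integrable (fun s : ℝ => Real.exp (-(a * s ^ 2))) := by
      simpa [neg_mul] using integrable_exp_neg_mul_sq ha
    exact h1.mul_prod h1
  have hFint : Integrable (Function.uncurry F) (γ.prod ((volume : Measure ℝ).prod volume)) := by
    have hbig : Integrable (fun z : H × (ℝ × ℝ) =>
        Real.exp (-(a * z.2.1 ^ 2)) * Real.exp (-(a * z.2.2 ^ 2)))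
        (γ.prod ((volume : Measure ℝ).prod volume)) := by
      have := (integrable_const (1:ℝ) (μ := γ)).mul_prod hg2
      simpa using this
    refine hbig.mono' hFcont.aestronglyMeasurable (Filter.Eventually.of_forall ?_)
    rintro ⟨u, p⟩
    rw [hFdef]
    simp only [Function.uncurry, Real.norm_eq_abs, abs_mul]
    have e1 : (0:ℝ) < Real.exp (-(a * p.1 ^ 2)) := Real.exp_pos _
    have e2 : (0:ℝ) < Real.exp (-(a * p.2 ^ 2)) := Real.exp_pos _
    calc |Real.cos (⟪u, b 0⟫ * p.1)| * |Real.exp (-(a * p.1 ^ 2))|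
          * (|Real.cos (⟪u, b 1⟫ * p.2)| * |Real.exp (-(a * p.2 ^ 2))|)
        ≤ 1 * |Real.exp (-(a * p.1 ^ 2))| * (1 * |Real.exp (-(a * p.2 ^ 2))|) := by
          gcongr <;> exact Real.abs_cos_le_one _
      _ = Real.exp (-(a * p.1 ^ 2)) * Real.exp (-(a * p.2 ^ 2)) := by
          rw [abs_of_pos e1, abs_of_pos e2]; ring
  -- LHS = ∫_u c^2 ∫_p F u p
  have hLHS : ∀ u : H, Real.exp (-(lam * (⟪u, b 0⟫ ^ 2 + ⟪u, b 1⟫ ^ 2)))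
      = (c * c) * ∫ p : ℝ × ℝ, F u p ∂((volume : Measure ℝ).prod volume) := by
    intro u
    have : Real.exp (-(lam * (⟪u, b 0⟫ ^ 2 + ⟪u, b 1⟫ ^ 2)))
        = Real.exp (-(lam * ⟪u, b 0⟫ ^ 2)) * Real.exp (-(lam * ⟪u, b 1⟫ ^ 2)) := by
      rw [← Real.exp_add]; ring_nf
    rw [this, hexpand, hexpand, hFdef,
      integral_prod_mul (fun s => Real.cos (⟪u, b 0⟫ * s) * Real.exp (-(a * s ^ 2)))
        (fun s => Real.cos (⟪u, b 1⟫ * s) * Real.exp (-(a * s ^ 2)))]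
    ring
  rw [integral_congr_ae (Filter.Eventually.of_forall hLHS), integral_const_mul]
  have hswap := integral_integral_swap hFint
  rw [hswap]
  -- inner integral over γ
  have hcos_int : ∀ (φ : H → ℝ), Continuous φ →
      Integrable (fun u => Real.cos (φ u)) γ := by
    intro φ hφ
    refine (integrable_const (1:ℝ)).mono'
      (Real.continuous_cos.comp hφ |>.aestronglyMeasurable)
      (Filter.Eventually.of_forall fun u => ?_)
    simpa using Real.abs_cos_le_one (φ u)
  have hinner : ∀ p : ℝ × ℝ, ∫ u, F u p ∂γ
      = (Real.exp (-(a * p.1 ^ 2)) * Real.exp (-(a * p.2 ^ 2)))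
        * Real.exp (-(α 0 ^ 2 * p.1 ^ 2 + α 1 ^ 2 * p.2 ^ 2) / 2) := by
    intro p
    have hre : ∀ u : H, F u p = (Real.exp (-(a * p.1 ^ 2)) * Real.exp (-(a * p.2 ^ 2)))
        * ((Real.cos (p.1 * ⟪u, b 0⟫ + p.2 * ⟪u, b 1⟫)
            + Real.cos (p.1 * ⟪u, b 0⟫ + (-p.2) * ⟪u, b 1⟫)) / 2) := by
      intro u
      rw [hFdef]
      simp only []
      have := Real.cos_add (p.1 * ⟪u, b 0⟫) (p.2 * ⟪u, b 1⟫)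
      have h2 := Real.cos_sub (p.1 * ⟪u, b 0⟫) (p.2 * ⟪u, b 1⟫)
      have h3 : p.1 * ⟪u, b 0⟫ + (-p.2) * ⟪u, b 1⟫
          = p.1 * ⟪u, b 0⟫ - p.2 * ⟪u, b 1⟫ := by ring
      rw [h3, this, h2, mul_comm ⟪u, b 0⟫ p.1, mul_comm ⟪u, b 1⟫ p.2]
      ring
    rw [integral_congr_ae (Filter.Eventually.of_forall hre), integral_const_mul]
    have hi1 : Integrable (fun u => Real.cos (p.1 * ⟪u, b 0⟫ + p.2 * ⟪u, b 1⟫)) γ :=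
      hcos_int _ (((continuous_const.mul hX).add (continuous_const.mul hY)))
    have hi2 : Integrable (fun u => Real.cos (p.1 * ⟪u, b 0⟫ + (-p.2) * ⟪u, b 1⟫)) γ :=
      hcos_int _ (((continuous_const.mul hX).add (continuous_const.mul hY)))
    rw [integral_div, integral_add hi1 hi2,
      char_two b α γ hγ p.1 p.2, char_two b α γ hγ p.1 (-p.2)]
    rw [show (-p.2) ^ 2 = p.2 ^ 2 by ring]
    ring
  rw [integral_congr_ae (Filter.Eventually.of_forall hinner)]
  -- outer integral over ℝ²
  have hout : ∀ p : ℝ × ℝ, (Real.exp (-(a * p.1 ^ 2)) * Real.exp (-(a * p.2 ^ 2)))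
        * Real.exp (-(α 0 ^ 2 * p.1 ^ 2 + α 1 ^ 2 * p.2 ^ 2) / 2)
      = Real.exp (-((a + α 0 ^ 2 / 2) * p.1 ^ 2))
        * Real.exp (-((a + α 1 ^ 2 / 2) * p.2 ^ 2)) := by
    intro p
    rw [← Real.exp_add, ← Real.exp_add, ← Real.exp_add]
    ring_nf
  rw [integral_congr_ae (Filter.Eventually.of_forall hout),
    integral_prod_mul (fun s => Real.exp (-((a + α 0 ^ 2 / 2) * s ^ 2)))
      (fun s => Real.exp (-((a + α 1 ^ 2 / 2) * s ^ 2)))]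
  have g0 : ∫ s : ℝ, Real.exp (-((a + α 0 ^ 2 / 2) * s ^ 2))
      = Real.sqrt (π / (a + α 0 ^ 2 / 2)) := by
    simpa [neg_mul] using integral_gaussian (a + α 0 ^ 2 / 2)
  have g1 : ∫ s : ℝ, Real.exp (-((a + α 1 ^ 2 / 2) * s ^ 2))
      = Real.sqrt (π / (a + α 1 ^ 2 / 2)) := by
    simpa [neg_mul] using integral_gaussian (a + α 1 ^ 2 / 2)
  rw [g0, g1]

lemma sqrt_bound_aux {α0 α1 t : ℝ} (h0 : 0 < α0) (h1 : 0 < α1) (ht : 1 ≤ t) :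
    ((Real.sqrt (π / (4 * (t^2/2))⁻¹))⁻¹ * (Real.sqrt (π / (4 * (t^2/2))⁻¹))⁻¹)
        * (Real.sqrt (π / ((4 * (t^2/2))⁻¹ + α0 ^ 2 / 2))
          * Real.sqrt (π / ((4 * (t^2/2))⁻¹ + α1 ^ 2 / 2)))
      ≤ (α0 * α1)⁻¹ * (t^2)⁻¹ := by
  have htpos : (0:ℝ) < t := lt_of_lt_of_le one_pos ht
  set a : ℝ := (4 * (t^2/2))⁻¹ with hadef
  have ha : 0 < a := by positivity
  have h2 : (Real.sqrt (π / a))⁻¹ * (Real.sqrt (π / a))⁻¹ = a / π := by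
    rw [← mul_inv, Real.mul_self_sqrt (by positivity), inv_div]
  have key : ∀ β : ℝ, 0 < β → Real.sqrt (π / (a + β ^ 2 / 2)) ≤ Real.sqrt (2 * π) / β := by
    intro β hβ
    have hle : π / (a + β ^ 2 / 2) ≤ π / (β ^ 2 / 2) := by
      gcongr
      linarith
    have step1 : Real.sqrt (π / (a + β ^ 2 / 2)) ≤ Real.sqrt (π / (β ^ 2 / 2)) :=
      Real.sqrt_le_sqrt hle
    refine step1.trans_eq ?_
    rw [show π / (β ^ 2 / 2) = (2 * π) / β ^ 2 by field_simp,
      Real.sqrt_div (by positivity) (β ^ 2), Real.sqrt_sq hβ.le]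
  have hfin : a / π * ((Real.sqrt (2*π)/α0) * (Real.sqrt (2*π)/α1)) = (α0*α1)⁻¹ * (t^2)⁻¹ := by
    have hss : Real.sqrt (2*π) * Real.sqrt (2*π) = 2*π := Real.mul_self_sqrt (by positivity)
    have h2a : a = (2 * t^2)⁻¹ := by rw [hadef]; ring_nf
    have hr : a / π * ((Real.sqrt (2*π)/α0) * (Real.sqrt (2*π)/α1))
        = (Real.sqrt (2*π) * Real.sqrt (2*π)) * a / (π * (α0*α1)) := by ring
    rw [hr, hss, h2a]
    field_simp
  calc ((Real.sqrt (π / a))⁻¹ * (Real.sqrt (π / a))⁻¹)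
        * (Real.sqrt (π / (a + α0 ^ 2 / 2)) * Real.sqrt (π / (a + α1 ^ 2 / 2)))
      ≤ (a / π) * ((Real.sqrt (2*π)/α0) * (Real.sqrt (2*π)/α1)) := by
        rw [h2]
        exact mul_le_mul_of_nonneg_left
          (mul_le_mul (key _ h0) (key _ h1) (Real.sqrt_nonneg _) (by positivity))
          (by positivity)
    _ = (α0*α1)⁻¹ * (t^2)⁻¹ := hfin


set_option maxHeartbeats 2000000 in
theorem stmt7' (b : HilbertBasis ℕ ℝ H) (α : ℕ → ℝ) (hα : ∀ n, 0 ≤ α n)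
    (hsum : Summable fun n => (α n) ^ 2)
    (γ : Measure H) [IsProbabilityMeasure γ]
    (hγ : ∀ x : H, Measure.map (fun u => ⟪u, x⟫) γ
      = ProbabilityTheory.gaussianReal 0
          (Real.toNNReal (∑' n, (α n) ^ 2 * ⟪x, b n⟫ ^ 2)))
    (hα0 : 0 < α 0) (hα1 : 0 < α 1) :
    Integrable (fun u : H => ‖u‖⁻¹) γ ∧
    0 < ∫ u : H, ‖u‖⁻¹ ∂γ ∧
    IsProbabilityMeasure
      (γ.withDensity fun u => ENNReal.ofReal ((∫ w : H, ‖w‖⁻¹ ∂γ)⁻¹ * ‖u‖⁻¹)) ∧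
    IsProbabilityMeasure
      (Measure.map (fun u : H => ‖u‖⁻¹ • u)
        (γ.withDensity fun u => ENNReal.ofReal ((∫ w : H, ‖w‖⁻¹ ∂γ)⁻¹ * ‖u‖⁻¹))) ∧
    Measure.map (fun u : H => ‖u‖⁻¹ • u)
        (γ.withDensity fun u => ENNReal.ofReal ((∫ w : H, ‖w‖⁻¹ ∂γ)⁻¹ * ‖u‖⁻¹))
        (Metric.sphere (0 : H) 1) = 1 := by
  classical
  set q : H → ℝ := fun u => ⟪u, b 0⟫ ^ 2 + ⟪u, b 1⟫ ^ 2 with hqdef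
  have hX : Continuous fun u : H => ⟪u, b 0⟫ := continuous_id.inner continuous_const
  have hY : Continuous fun u : H => ⟪u, b 1⟫ := continuous_id.inner continuous_const
  have hq_cont : Continuous q := (hX.pow 2).add (hY.pow 2)
  have hq_nonneg : ∀ u, 0 ≤ q u := fun u => by positivity
  -- the first coordinate is a nondegenerate Gaussian, so it vanishes on a null set
  have hvar0 : (∑' n, (α n) ^ 2 * ⟪b 0, b n⟫ ^ 2) = α 0 ^ 2 := by
    have h0 : ∀ n ∉ ({0} : Finset ℕ), (α n) ^ 2 * ⟪b 0, b n⟫ ^ 2 = 0 := by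
      intro n hn
      simp only [Finset.mem_singleton] at hn
      rw [orthonormal_iff_ite.mp b.orthonormal 0 n, if_neg (fun h => hn h.symm)]
      ring
    rw [tsum_eq_sum h0, Finset.sum_singleton,
      orthonormal_iff_ite.mp b.orthonormal 0 0, if_pos rfl]
    ring
  have hXzero : γ {u : H | ⟪u, b 0⟫ = 0} = 0 := by
    have hm : Measurable fun u : H => ⟪u, b 0⟫ := hX.measurable
    have hpre : {u : H | ⟪u, b 0⟫ = 0} = (fun u : H => ⟪u, b 0⟫) ⁻¹' {0} := rfl
    rw [hpre, ← Measure.map_apply hm (measurableSet_singleton 0), hγ (b 0)]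
    have hv : (Real.toNNReal (∑' n, (α n) ^ 2 * ⟪b 0, b n⟫ ^ 2)) ≠ 0 := by
      rw [hvar0]
      simp only [ne_eq, Real.toNNReal_eq_zero, not_le]
      positivity
    exact ProbabilityTheory.gaussianReal_absolutelyContinuous _ hv (Real.volume_singleton)
  have hq_pos : ∀ᵐ u ∂γ, 0 < q u := by
    rw [ae_iff]
    refine measure_mono_null ?_ hXzero
    intro u hu
    simp only [Set.mem_setOf_eq, not_lt] at hu ⊢
    have h1 : q u = 0 := le_antisymm hu (hq_nonneg u)
    rw [hqdef] at h1
    simp only at h1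
    nlinarith [sq_nonneg ⟪u, b 0⟫, sq_nonneg ⟪u, b 1⟫]
  have hzero_sing : γ {(0 : H)} = 0 := by
    refine measure_mono_null ?_ hXzero
    intro u hu
    simp only [Set.mem_singleton_iff] at hu
    simp [hu]
  -- Bessel
  have hbessel : ∀ u : H, q u ≤ ‖u‖ ^ 2 := by
    intro u
    have h := b.orthonormal.sum_inner_products_le (s := ({0, 1} : Finset ℕ)) u
    rw [Finset.sum_pair (by norm_num : (0:ℕ) ≠ 1)] at h
    simpa [Real.norm_eq_abs, sq_abs, real_inner_comm] using h
  -- the Laplace-type function Φ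
  set Φ : ℝ → ℝ := fun t => ∫ u, Real.exp (-(t ^ 2 / 2 * q u)) ∂γ with hΦdef
  have hexp_cont : ∀ t : ℝ, Continuous fun u => Real.exp (-(t ^ 2 / 2 * q u)) :=
    fun t => Real.continuous_exp.comp ((continuous_const.mul hq_cont).neg)
  have hexp_int : ∀ t : ℝ, Integrable (fun u => Real.exp (-(t ^ 2 / 2 * q u))) γ := by
    intro t
    refine (integrable_const (1:ℝ)).mono' (hexp_cont t).aestronglyMeasurable
      (Filter.Eventually.of_forall fun u => ?_)
    rw [Real.norm_eq_abs, abs_of_pos (Real.exp_pos _)]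
    exact Real.exp_le_one_iff.mpr (by nlinarith [hq_nonneg u, sq_nonneg t])
  have hΦ_nonneg : ∀ t, 0 ≤ Φ t :=
    fun t => integral_nonneg fun u => (Real.exp_pos _).le
  have hΦ_le_one : ∀ t, Φ t ≤ 1 := by
    intro t
    calc Φ t ≤ ∫ _u, (1:ℝ) ∂γ := by
          refine integral_mono (hexp_int t) (integrable_const 1) fun u => ?_
          exact Real.exp_le_one_iff.mpr (by nlinarith [hq_nonneg u, sq_nonneg t])
      _ = 1 := by simp
  have hΦ_bound : ∀ t, 1 ≤ t → Φ t ≤ (α 0 * α 1)⁻¹ * (t ^ 2)⁻¹ := by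
    intro t ht
    have hlam : 0 < t ^ 2 / 2 := by nlinarith
    have hres := laplace_two b α γ hγ hlam
    rw [hΦdef]
    simp only []
    rw [hres]
    exact sqrt_bound_aux hα0 hα1 ht
  -- main finiteness estimate
  have hmeas_pair : Measurable fun z : H × ℝ => ENNReal.ofReal (Real.exp (-(z.2 ^ 2 / 2 * q z.1))) := by
    apply ENNReal.measurable_ofReal.comp
    exact (Real.continuous_exp.comp
      (((continuous_snd.pow 2).div_const 2 |>.mul (hq_cont.comp continuous_fst)).neg)).measurable
  have hkey : ∫⁻ u, ENNReal.ofReal ‖u‖⁻¹ ∂γ < ⊤ := by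
    have hpt : ∀ᵐ u ∂γ, ENNReal.ofReal ‖u‖⁻¹
        ≤ ENNReal.ofReal (Real.sqrt (2 / π))
          * ∫⁻ t in Set.Ioi (0:ℝ), ENNReal.ofReal (Real.exp (-(t ^ 2 / 2 * q u))) := by
      filter_upwards [hq_pos] with u hqu
      have hfcongr : (fun t : ℝ => Real.exp (-(t ^ 2 / 2 * q u)))
          = fun t => Real.exp (-(q u / 2 * t ^ 2)) := by
        funext t; ring_nf
      have h1 : IntegrableOn (fun t : ℝ => Real.exp (-(t ^ 2 / 2 * q u))) (Set.Ioi 0) := by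
        rw [hfcongr]
        have h := integrable_exp_neg_mul_sq (b := q u / 2) (half_pos hqu)
        have h1' : Integrable (fun t : ℝ => Real.exp (-(q u / 2 * t ^ 2))) volume := by
          simpa [neg_mul] using h
        exact h1'.integrableOn
      have h2 : ∫ t in Set.Ioi (0:ℝ), Real.exp (-(t ^ 2 / 2 * q u))
          = Real.sqrt (π / (q u / 2)) / 2 := by
        rw [hfcongr]
        have h := integral_gaussian_Ioi (q u / 2)
        simpa [neg_mul] using h
      have hsqq : 0 < Real.sqrt (q u) := Real.sqrt_pos.mpr hqu
      have hb1 : Real.sqrt (q u) ≤ ‖u‖ := by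
        rw [show ‖u‖ = Real.sqrt (‖u‖ ^ 2) from (Real.sqrt_sq (norm_nonneg u)).symm]
        exact Real.sqrt_le_sqrt (hbessel u)
      have hb2 : ‖u‖⁻¹ ≤ (Real.sqrt (q u))⁻¹ := by
        apply inv_anti₀ hsqq hb1
      have hb3 : Real.sqrt (2 / π) * (Real.sqrt (π / (q u / 2)) / 2)
          = (Real.sqrt (q u))⁻¹ := by
        rw [show Real.sqrt (2/π) * (Real.sqrt (π/(q u/2))/2)
            = Real.sqrt ((2/π) * (π/(q u/2))) / 2 by
          rw [Real.sqrt_mul (by positivity) (π/(q u/2))]; ring]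
        rw [show (2/π) * (π/(q u/2)) = 4 / q u by field_simp [pi_ne_zero]; ring]
        rw [Real.sqrt_div (by norm_num : (0:ℝ) ≤ 4) (q u),
          show Real.sqrt 4 = 2 by
            rw [show (4:ℝ) = 2 ^ 2 by norm_num, Real.sqrt_sq (by norm_num : (0:ℝ) ≤ 2)]]
        rw [div_div, mul_comm (Real.sqrt (q u)) 2, ← div_div, div_self (by norm_num : (2:ℝ) ≠ 0), one_div]
      have hreal : ‖u‖⁻¹ ≤ Real.sqrt (2 / π) * ∫ t in Set.Ioi (0:ℝ), Real.exp (-(t ^ 2 / 2 * q u)) := by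
        rw [h2, hb3]
        exact hb2
      calc ENNReal.ofReal ‖u‖⁻¹
          ≤ ENNReal.ofReal (Real.sqrt (2 / π)
              * ∫ t in Set.Ioi (0:ℝ), Real.exp (-(t ^ 2 / 2 * q u))) :=
            ENNReal.ofReal_le_ofReal hreal
        _ = ENNReal.ofReal (Real.sqrt (2 / π))
            * ENNReal.ofReal (∫ t in Set.Ioi (0:ℝ), Real.exp (-(t ^ 2 / 2 * q u))) :=
            ENNReal.ofReal_mul (Real.sqrt_nonneg _)
        _ = ENNReal.ofReal (Real.sqrt (2 / π))
            * ∫⁻ t in Set.Ioi (0:ℝ), ENNReal.ofReal (Real.exp (-(t ^ 2 / 2 * q u))) := by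
            rw [ofReal_integral_eq_lintegral_ofReal h1
              (Filter.Eventually.of_forall fun t => (Real.exp_pos _).le)]
    -- finiteness of the t-integral
    have hfinal : ∫⁻ t in Set.Ioi (0:ℝ), ENNReal.ofReal (Φ t) < ⊤ := by
      have hsplit : (volume : Measure ℝ).restrict (Set.Ioi 0)
          ≤ volume.restrict (Set.Ioc 0 1) + volume.restrict (Set.Ioi 1) := by
        rw [← Set.Ioc_union_Ioi_eq_Ioi (zero_le_one (α := ℝ))]
        exact Measure.restrict_union_le _ _
      have hA : ∫⁻ t in Set.Ioc (0:ℝ) 1, ENNReal.ofReal (Φ t) ≤ 1 := by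
        calc ∫⁻ t in Set.Ioc (0:ℝ) 1, ENNReal.ofReal (Φ t)
            ≤ ∫⁻ _t in Set.Ioc (0:ℝ) 1, 1 :=
              lintegral_mono fun t => ENNReal.ofReal_le_one.mpr (hΦ_le_one t)
          _ = 1 := by simp
      have hintB : IntegrableOn (fun t : ℝ => (α 0 * α 1)⁻¹ * (t ^ 2)⁻¹) (Set.Ioi 1) := by
        have h := integrableOn_Ioi_rpow_of_lt (show (-2:ℝ) < -1 by norm_num) one_pos
        have heq : Set.EqOn (fun t : ℝ => t ^ (-2:ℝ)) (fun t : ℝ => (t ^ 2)⁻¹) (Set.Ioi 1) := by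
          intro t ht
          have ht0 : (0:ℝ) ≤ t := le_of_lt (lt_trans one_pos (Set.mem_Ioi.mp ht))
          simp only []
          rw [show (-2:ℝ) = -((2:ℕ):ℝ) by norm_num, Real.rpow_neg ht0, Real.rpow_natCast]
        exact ((h.congr_fun heq measurableSet_Ioi)).const_mul _
      have hB : ∫⁻ t in Set.Ioi (1:ℝ), ENNReal.ofReal (Φ t) < ⊤ := by
        calc ∫⁻ t in Set.Ioi (1:ℝ), ENNReal.ofReal (Φ t)
            ≤ ∫⁻ t in Set.Ioi (1:ℝ), ENNReal.ofReal ((α 0 * α 1)⁻¹ * (t ^ 2)⁻¹) := by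
              refine lintegral_mono_ae ?_
              filter_upwards [ae_restrict_mem measurableSet_Ioi] with t ht
              exact ENNReal.ofReal_le_ofReal (hΦ_bound t (le_of_lt (Set.mem_Ioi.mp ht)))
          _ = ENNReal.ofReal (∫ t in Set.Ioi (1:ℝ), (α 0 * α 1)⁻¹ * (t ^ 2)⁻¹) := by
              rw [ofReal_integral_eq_lintegral_ofReal hintB
                (Filter.Eventually.of_forall fun t => by positivity)]
          _ < ⊤ := ENNReal.ofReal_lt_top
      calc ∫⁻ t in Set.Ioi (0:ℝ), ENNReal.ofReal (Φ t)
          ≤ ∫⁻ t, ENNReal.ofReal (Φ t)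
              ∂(volume.restrict (Set.Ioc 0 1) + volume.restrict (Set.Ioi 1)) :=
            lintegral_mono' hsplit le_rfl
        _ = (∫⁻ t in Set.Ioc (0:ℝ) 1, ENNReal.ofReal (Φ t))
            + ∫⁻ t in Set.Ioi (1:ℝ), ENNReal.ofReal (Φ t) := lintegral_add_measure _ _ _
        _ < ⊤ := ENNReal.add_lt_top.mpr ⟨lt_of_le_of_lt hA ENNReal.one_lt_top, hB⟩
    calc ∫⁻ u, ENNReal.ofReal ‖u‖⁻¹ ∂γ
        ≤ ∫⁻ u, (ENNReal.ofReal (Real.sqrt (2 / π))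
            * ∫⁻ t in Set.Ioi (0:ℝ), ENNReal.ofReal (Real.exp (-(t ^ 2 / 2 * q u)))) ∂γ :=
          lintegral_mono_ae hpt
      _ = ENNReal.ofReal (Real.sqrt (2 / π))
          * ∫⁻ u, (∫⁻ t in Set.Ioi (0:ℝ), ENNReal.ofReal (Real.exp (-(t ^ 2 / 2 * q u)))) ∂γ :=
          lintegral_const_mul' _ _ ENNReal.ofReal_ne_top
      _ = ENNReal.ofReal (Real.sqrt (2 / π))
          * ∫⁻ t in Set.Ioi (0:ℝ), (∫⁻ u, ENNReal.ofReal (Real.exp (-(t ^ 2 / 2 * q u))) ∂γ) := by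
          rw [lintegral_lintegral_swap hmeas_pair.aemeasurable]
      _ = ENNReal.ofReal (Real.sqrt (2 / π)) * ∫⁻ t in Set.Ioi (0:ℝ), ENNReal.ofReal (Φ t) := by
          congr 1
          refine lintegral_congr fun t => ?_
          rw [ofReal_integral_eq_lintegral_ofReal (hexp_int t)
            (Filter.Eventually.of_forall fun u => (Real.exp_pos _).le)]
      _ < ⊤ := ENNReal.mul_lt_top ENNReal.ofReal_lt_top hfinal
  -- Integrability
  have hinv_nonneg : ∀ u : H, (0:ℝ) ≤ ‖u‖⁻¹ := fun u => inv_nonneg.mpr (norm_nonneg u)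
  have hint_main : Integrable (fun u : H => ‖u‖⁻¹) γ := by
    refine ⟨(measurable_norm.inv).aestronglyMeasurable, ?_⟩
    rw [hasFiniteIntegral_iff_ofReal (Filter.Eventually.of_forall hinv_nonneg)]
    exact hkey
  -- Positivity
  have hZpos : 0 < ∫ u : H, ‖u‖⁻¹ ∂γ := by
    rw [integral_pos_iff_support_of_nonneg hinv_nonneg hint_main]
    have hsupp : Function.support (fun u : H => ‖u‖⁻¹) = {(0:H)}ᶜ := by
      ext u
      simp [Function.mem_support, inv_eq_zero, norm_eq_zero]
    rw [hsupp]
    rw [measure_compl (measurableSet_singleton _) (measure_ne_top _ _), hzero_sing,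
      measure_univ]
    norm_num
  set Z : ℝ := ∫ u : H, ‖u‖⁻¹ ∂γ with hZdef
  -- withDensity is a probability measure
  have hdens : IsProbabilityMeasure
      (γ.withDensity fun u => ENNReal.ofReal (Z⁻¹ * ‖u‖⁻¹)) := by
    constructor
    rw [withDensity_apply _ MeasurableSet.univ, Measure.restrict_univ]
    have : ∀ u : H, ENNReal.ofReal (Z⁻¹ * ‖u‖⁻¹)
        = ENNReal.ofReal Z⁻¹ * ENNReal.ofReal ‖u‖⁻¹ := fun u =>
      ENNReal.ofReal_mul (inv_nonneg.mpr hZpos.le)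
    simp_rw [this]
    rw [lintegral_const_mul' _ _ ENNReal.ofReal_ne_top,
      ← ofReal_integral_eq_lintegral_ofReal hint_main
        (Filter.Eventually.of_forall hinv_nonneg),
      ← hZdef, ← ENNReal.ofReal_mul (inv_nonneg.mpr hZpos.le),
      inv_mul_cancel₀ hZpos.ne', ENNReal.ofReal_one]
  have hfmeas : Measurable fun u : H => ‖u‖⁻¹ • u :=
    (measurable_norm.inv).smul measurable_id
  have hmap : IsProbabilityMeasure
      (Measure.map (fun u : H => ‖u‖⁻¹ • u)
        (γ.withDensity fun u => ENNReal.ofReal (Z⁻¹ * ‖u‖⁻¹))) :=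
    Measure.isProbabilityMeasure_map hfmeas.aemeasurable
  have hsphere : Measure.map (fun u : H => ‖u‖⁻¹ • u)
      (γ.withDensity fun u => ENNReal.ofReal (Z⁻¹ * ‖u‖⁻¹)) (Metric.sphere (0 : H) 1) = 1 := by
    rw [Measure.map_apply hfmeas Metric.isClosed_sphere.measurableSet]
    have hpre : (fun u : H => ‖u‖⁻¹ • u) ⁻¹' Metric.sphere (0:H) 1 = {(0:H)}ᶜ := by
      ext u
      simp only [Set.mem_preimage, Metric.mem_sphere, dist_zero_right, Set.mem_compl_iff,
        Set.mem_singleton_iff]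
      constructor
      · intro h h0
        rw [h0] at h
        simp at h
      · intro h
        rw [norm_smul, norm_inv, norm_norm, inv_mul_cancel₀ (norm_ne_zero_iff.mpr h)]
    rw [hpre]
    have hν0 : (γ.withDensity fun u => ENNReal.ofReal (Z⁻¹ * ‖u‖⁻¹)) {(0:H)} = 0 := by
      rw [withDensity_apply _ (measurableSet_singleton _),
        Measure.restrict_eq_zero.mpr hzero_sing, lintegral_zero_measure]
    haveI := hdens
    rw [measure_compl (measurableSet_singleton _) (measure_ne_top _ _), hν0, measure_univ]
    simp
  exact ⟨hint_main, hZpos, hdens, hmap, hsphere⟩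

end Aux

/-- **Finiteness and positivity of the normalizing constant of the invariant
measure (Theorem 2.1).** Let `γ` be the centered Gaussian measure on a real
separable Hilbert space `H` with covariance eigenvalues `α n ^ 2` in a Hilbert
basis `(e n)`, `∑ α n ^ 2 < ∞`, and assume `α 0 > 0` and `α 1 > 0`. Then
`Z := ∫ ‖u‖⁻¹ γ(du)` is finite and strictly positive; consequently
`Z⁻¹ ‖u‖⁻¹ γ(du)` is a Borel probability measure on `H`, and its image under
the radial projection `u ↦ u/‖u‖` is a Borel probability measure carried by the
unit sphere `S` of `H`. -/
theorem stmt7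
    {H : Type*} [NormedAddCommGroup H] [InnerProductSpace ℝ H] [CompleteSpace H]
    [SecondCountableTopology H] [MeasurableSpace H] [BorelSpace H]
    (b : HilbertBasis ℕ ℝ H) (α : ℕ → ℝ) (hα : ∀ n, 0 ≤ α n)
    (hsum : Summable fun n => (α n) ^ 2)
    (γ : Measure H) [IsProbabilityMeasure γ]
    (hγ : ∀ x : H, Measure.map (fun u => ⟪u, x⟫) γ
      = ProbabilityTheory.gaussianReal 0
          (Real.toNNReal (∑' n, (α n) ^ 2 * ⟪x, b n⟫ ^ 2)))
    (hα0 : 0 < α 0) (hα1 : 0 < α 1) :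
    Integrable (fun u : H => ‖u‖⁻¹) γ ∧
    0 < ∫ u : H, ‖u‖⁻¹ ∂γ ∧
    IsProbabilityMeasure
      (γ.withDensity fun u => ENNReal.ofReal ((∫ w : H, ‖w‖⁻¹ ∂γ)⁻¹ * ‖u‖⁻¹)) ∧
    IsProbabilityMeasure
      (Measure.map (fun u : H => ‖u‖⁻¹ • u)
        (γ.withDensity fun u => ENNReal.ofReal ((∫ w : H, ‖w‖⁻¹ ∂γ)⁻¹ * ‖u‖⁻¹))) ∧
    Measure.map (fun u : H => ‖u‖⁻¹ • u)
        (γ.withDensity fun u => ENNReal.ofReal ((∫ w : H, ‖w‖⁻¹ ∂γ)⁻¹ * ‖u‖⁻¹))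
        (Metric.sphere (0 : H) 1) = 1 :=
  stmt7' b α hα hsum γ hγ hα0 hα1
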